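/- With c(l,k) defined by the Buckley–Osthus recurrences (as in the previous context, parameter a > 0), for every natural number N and every k ≥ 1, the series Σ_{l=1}^{∞} l^N c(l,k) converges. -/

import Mathlib

open Real

noncomputable def betaF (x y : ℝ) : ℝ := Real.Gamma x * Real.Gamma y / Real.Gamma (x + y)

theorem clk_summable (a : ℝ) (ha : 0 < a) (c : ℕ → ℕ → ℝ)
    (h00 : ∀ l : ℕ, c l 0 = 0) (h0k : ∀ k : ℕ, c 0 k = 0)
    (h1 : ∀ k : ℕ, 1 ≤ k →
      c 1 k = c 1 (k - 1) * ((a + (k : ℝ) - 1) / ((k : ℝ) + 3 * a + 1)) +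
        (betaF ((k : ℝ) - 1 + a) (a + 2) / betaF a (a + 1)) *
          ((a + (k : ℝ) - 1) / ((k : ℝ) + 3 * a + 1)))
    (hl : ∀ l k : ℕ, 2 ≤ l → 1 ≤ k →
      c l k = c l (k - 1) *
          ((a * (l : ℝ) + (k : ℝ) - 1) / ((l : ℝ) * (1 + a) + (k : ℝ) + 2 * a)) +
        c (l - 1) k *
          (((l : ℝ) - 2 + a) / ((l : ℝ) * (1 + a) + (k : ℝ) + 2 * a))) :
    ∀ N : ℕ, ∀ k : ℕ, 1 ≤ k →
      Summable (fun l : ℕ => (l : ℝ) ^ N * c l k) := by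
  set ρ : ℝ := (2 + a) / (2 + 2 * a) with hρdef
  have hρ0 : 0 < ρ := by positivity
  have hρ1 : ρ < 1 := by
    rw [hρdef, div_lt_one (by linarith)]; linarith
  clear_value ρ
  -- Main bound: for each k there is M with |c l k| ≤ M * (l+1)^k * ρ^l
  have key : ∀ k : ℕ, ∃ M : ℝ, 0 ≤ M ∧ ∀ l : ℕ, |c l k| ≤ M * ((l : ℝ) + 1) ^ k * ρ ^ l := by
    intro k
    induction k with
    | zero =>
      refine ⟨0, le_refl 0, fun l => ?_⟩
      simp [h00 l]
    | succ n ih =>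
      obtain ⟨M', hM'0, hM'⟩ := ih
      refine ⟨max M' (|c 1 (n + 1)| / ρ), le_trans hM'0 (le_max_left _ _), ?_⟩
      set M : ℝ := max M' (|c 1 (n + 1)| / ρ) with hM
      have hM0 : 0 ≤ M := le_trans hM'0 (le_max_left _ _)
      have hMM' : M' ≤ M := le_max_left _ _
      intro l
      induction l with
      | zero => simp only [h0k (n + 1), abs_zero, Nat.cast_zero, zero_add, one_pow, pow_zero,
          mul_one]; exact hM0
      | succ m ihm =>
        rcases Nat.eq_zero_or_pos m with hm | hm
        · subst hm
          have h2 : |c 1 (n + 1)| / ρ ≤ M := le_max_right _ _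
          have : |c 1 (n + 1)| ≤ M * ρ := by
            rw [div_le_iff₀ hρ0] at h2; linarith
          calc |c 1 (n + 1)| ≤ M * ρ := this
            _ = M * 1 * ρ ^ 1 := by ring
            _ ≤ M * ((1 : ℝ) + 1) ^ (n + 1) * ρ ^ 1 := by
                gcongr
                exact one_le_pow₀ (by norm_num)
            _ = M * (((1 : ℕ) : ℝ) + 1) ^ (n + 1) * ρ ^ 1 := by norm_num
        · -- m ≥ 1, so l = m+1 ≥ 2
          have hrec := hl (m + 1) (n + 1) (by omega) (by omega)
          simp only [Nat.add_sub_cancel] at hrec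
          set L : ℝ := ((m + 1 : ℕ) : ℝ) with hL
          have hL2 : (2 : ℝ) ≤ L := by
            rw [hL]; exact_mod_cast Nat.succ_le_succ hm
          set K : ℝ := ((n + 1 : ℕ) : ℝ) with hK
          have hK1 : (1 : ℝ) ≤ K := by
            rw [hK]; exact_mod_cast Nat.succ_le_succ (Nat.zero_le n)
          have hD : 0 < L * (1 + a) + K + 2 * a := by nlinarith
          have hA0 : 0 ≤ (a * L + K - 1) / (L * (1 + a) + K + 2 * a) := by
            apply div_nonneg _ hD.le; nlinarith
          have hA1 : (a * L + K - 1) / (L * (1 + a) + K + 2 * a) ≤ 1 := by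
            rw [div_le_one hD]; nlinarith
          have hq0 : 0 ≤ (L - 2 + a) / (L * (1 + a) + K + 2 * a) := by
            apply div_nonneg _ hD.le; linarith
          have hqρ : (L - 2 + a) / (L * (1 + a) + K + 2 * a) ≤ ρ := by
            rw [hρdef, div_le_div_iff₀ hD (by linarith)]
            nlinarith [mul_nonneg ha.le (by linarith : (0:ℝ) ≤ L),
              mul_nonneg (mul_nonneg ha.le ha.le) (by linarith : (0:ℝ) ≤ L),
              mul_nonneg ha.le (by linarith : (0:ℝ) ≤ K)]
          have habs : |c (m + 1) (n + 1)| ≤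
              |c (m + 1) n| * ((a * L + K - 1) / (L * (1 + a) + K + 2 * a)) +
              |c m (n + 1)| * ((L - 2 + a) / (L * (1 + a) + K + 2 * a)) := by
            rw [hrec]
            refine le_trans (abs_add_le _ _) ?_
            rw [abs_mul, abs_mul, abs_of_nonneg hA0, abs_of_nonneg hq0]
          have hb1 : |c (m + 1) n| ≤ M' * (L + 1) ^ n * ρ ^ (m + 1) := hM' (m + 1)
          have hb2 : |c m (n + 1)| ≤ M * ((m : ℝ) + 1) ^ (n + 1) * ρ ^ m := ihm
          -- combine
          have hρm : (0 : ℝ) ≤ ρ ^ m := le_of_lt (pow_pos hρ0 m)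
          have hρm1 : (0 : ℝ) ≤ ρ ^ (m + 1) := le_of_lt (pow_pos hρ0 (m + 1))
          have step1 : |c (m + 1) (n + 1)| ≤
              M * (L + 1) ^ n * ρ ^ (m + 1) + M * ((m : ℝ) + 1) ^ (n + 1) * ρ ^ m * ρ := by
            refine le_trans habs ?_
            have t1 : |c (m + 1) n| * ((a * L + K - 1) / (L * (1 + a) + K + 2 * a)) ≤
                M * (L + 1) ^ n * ρ ^ (m + 1) := by
              calc |c (m + 1) n| * ((a * L + K - 1) / (L * (1 + a) + K + 2 * a))
                  ≤ (M' * (L + 1) ^ n * ρ ^ (m + 1)) * 1 := by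
                    apply mul_le_mul hb1 hA1 hA0 (by positivity)
                _ = M' * (L + 1) ^ n * ρ ^ (m + 1) := by ring
                _ ≤ M * (L + 1) ^ n * ρ ^ (m + 1) := by
                    apply mul_le_mul_of_nonneg_right _ hρm1
                    apply mul_le_mul_of_nonneg_right hMM'
                    positivity
            have t2 : |c m (n + 1)| * ((L - 2 + a) / (L * (1 + a) + K + 2 * a)) ≤
                M * ((m : ℝ) + 1) ^ (n + 1) * ρ ^ m * ρ := by
              apply mul_le_mul hb2 hqρ hq0 (by positivity)
            linarith
          have hmL : (m : ℝ) + 1 = L := by rw [hL]; push_cast; ring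
          have hLpos : (0 : ℝ) < L := by linarith
          have hpow : (L + 1) ^ n + L ^ (n + 1) ≤ (L + 1) ^ (n + 1) := by
            have h1 : L ^ (n + 1) ≤ (L + 1) ^ n * L := by
              rw [pow_succ]
              apply mul_le_mul_of_nonneg_right _ hLpos.le
              exact pow_le_pow_left₀ hLpos.le (by linarith) n
            have h2 : (L + 1) ^ (n + 1) = (L + 1) ^ n * L + (L + 1) ^ n := by
              rw [pow_succ]; ring
            linarith
          calc |c (m + 1) (n + 1)| ≤
              M * (L + 1) ^ n * ρ ^ (m + 1) + M * ((m : ℝ) + 1) ^ (n + 1) * ρ ^ m * ρ := step1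
            _ = M * ((L + 1) ^ n + L ^ (n + 1)) * ρ ^ (m + 1) := by
                rw [hmL, pow_succ]; ring
            _ ≤ M * (L + 1) ^ (n + 1) * ρ ^ (m + 1) := by
                apply mul_le_mul_of_nonneg_right _ hρm1
                exact mul_le_mul_of_nonneg_left hpow hM0
            _ = M * (((m + 1 : ℕ) : ℝ) + 1) ^ (n + 1) * ρ ^ (m + 1) := by rw [hL]
  intro N k hk
  obtain ⟨M, hM0, hM⟩ := key k
  -- comparison with (M/ρ) * ((l+1)^(N+k) * ρ^(l+1))
  have hg : Summable (fun n : ℕ => ((n : ℝ)) ^ (N + k) * ρ ^ n) := by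
    apply summable_pow_mul_geometric_of_norm_lt_one
    rw [Real.norm_eq_abs, abs_of_pos hρ0]; exact hρ1
  have hg' : Summable (fun n : ℕ => (((n + 1 : ℕ) : ℝ)) ^ (N + k) * ρ ^ (n + 1)) := by
    exact (summable_nat_add_iff (f := fun n : ℕ => ((n : ℝ)) ^ (N + k) * ρ ^ n) 1).mpr hg
  have hg'' : Summable (fun n : ℕ => (M / ρ) * ((((n + 1 : ℕ) : ℝ)) ^ (N + k) * ρ ^ (n + 1))) :=
    hg'.mul_left _
  apply Summable.of_norm_bounded hg''
  intro l
  rw [Real.norm_eq_abs, abs_mul, abs_pow, Nat.abs_cast]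
  have h1 : |c l k| ≤ M * ((l : ℝ) + 1) ^ k * ρ ^ l := hM l
  have h2 : ((l : ℝ)) ^ N ≤ ((l : ℝ) + 1) ^ N :=
    pow_le_pow_left₀ (Nat.cast_nonneg l) (by linarith) N
  have hcast : ((l + 1 : ℕ) : ℝ) = (l : ℝ) + 1 := by push_cast; ring
  have hMρ : M / ρ * ρ = M := div_mul_cancel₀ M hρ0.ne'
  have h3 : (M / ρ) * ((((l + 1 : ℕ) : ℝ)) ^ (N + k) * ρ ^ (l + 1)) =
      M * ((l : ℝ) + 1) ^ (N + k) * ρ ^ l := by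
    rw [hcast, pow_succ]
    calc M / ρ * (((l : ℝ) + 1) ^ (N + k) * (ρ ^ l * ρ)) =
        (M / ρ * ρ) * (((l : ℝ) + 1) ^ (N + k) * ρ ^ l) := by ring
      _ = M * ((l : ℝ) + 1) ^ (N + k) * ρ ^ l := by rw [hMρ]; ring
  rw [h3, pow_add]
  calc ((l : ℝ)) ^ N * |c l k| ≤ ((l : ℝ) + 1) ^ N * (M * ((l : ℝ) + 1) ^ k * ρ ^ l) := by
        apply mul_le_mul h2 h1 (abs_nonneg _) (by positivity)
    _ = M * (((l : ℝ) + 1) ^ N * ((l : ℝ) + 1) ^ k) * ρ ^ l := by ring
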